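/- All zeros of the polynomial s ↦ ₂F₁(-n, (μ+s)/2; μ+1/2; 2) (a polynomial of degree n in s) lie on the critical line Re(s) = 1/2, for every real μ > -1/2 and nonnegative integer n. -/
import Mathlib


/-- Rising factorial (Pochhammer symbol) on ℂ. -/
noncomputable def ascC (a : ℂ) (k : ℕ) : ℂ := ∏ i ∈ Finset.range k, (a + i)

/-- Terminating Gauss hypergeometric sum `₂F₁(-n, b; c; 2)`. -/
noncomputable def F2 (n : ℕ) (b c : ℂ) : ℂ :=
  ∑ j ∈ Finset.range (n + 1),
    ascC (-(n : ℂ)) j * ascC b j / ascC c j * 2 ^ j / (j.factorial : ℂ)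

/-! ### Basic facts about the rising factorial -/

lemma ascC_zero (a : ℂ) : ascC a 0 = 1 := by simp [ascC]

lemma ascC_succ (a : ℂ) (k : ℕ) : ascC a (k+1) = ascC a k * (a + k) :=
  Finset.prod_range_succ _ _

lemma ascC_shift (x : ℂ) (j : ℕ) : ascC x j * (x + j) = x * ascC (x+1) j := by
  induction j with
  | zero => simp [ascC]
  | succ k ih =>
    rw [ascC_succ, ascC_succ]
    push_cast
    linear_combination (x + (k:ℂ) + 1) * ih

lemma ascC_ne_zero {c : ℂ} (hc : 0 < c.re) (k : ℕ) : ascC c k ≠ 0 := by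
  apply Finset.prod_ne_zero_iff.mpr
  intro i _ h
  have h2 : (c + (i:ℂ)).re = 0 := by rw [h]; simp
  simp only [Complex.add_re, Complex.natCast_re] at h2
  have : (0:ℝ) < c.re + i := by positivity
  linarith

lemma ascC_neg_nat_zero {k j : ℕ} (h : k < j) : ascC (-(k:ℂ)) j = 0 :=
  Finset.prod_eq_zero (Finset.mem_range.mpr h) (by simp)

lemma re_pos_ne_zero {z : ℂ} (h : 0 < z.re) : z ≠ 0 := fun hz => by simp [hz] at h

lemma F2_zero' (b c : ℂ) : F2 0 b c = 1 := by
  simp [F2, ascC]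

lemma F2_one' (b c : ℂ) (hc : c ≠ 0) : F2 1 b c = (c - 2*b)/c := by
  rw [F2]
  rw [Finset.sum_range_succ, Finset.sum_range_succ, Finset.sum_range_zero]
  simp [ascC_zero, ascC_succ]
  field_simp
  ring

/-! ### The contiguous (three-term) relation for `F2` -/

noncomputable def Tm (b c : ℂ) (k j : ℕ) : ℂ :=
  ascC (-(k : ℂ)) j * ascC b j / ascC c j * 2 ^ j / (j.factorial : ℂ)

noncomputable def Hm (m : ℕ) (b c : ℂ) (j : ℕ) : ℂ :=
  -(j:ℂ) * (c + j - 1) * Tm b c (m+2) j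

lemma core (m j : ℕ) (b c u : ℂ) (hcj' : c + (j:ℂ) ≠ 0) :
    ((m:ℂ)+2) * ((c + ((m:ℂ)+1)) * (ascC (-((m:ℂ)+2)) j * u)
      - (c-2*b) * (ascC (-((m:ℂ)+1)) j * u) - ((m:ℂ)+1) * (ascC (-((m:ℂ))) j * u))
    = -((j:ℂ)+1) * (c + (j:ℂ)) * ((ascC (-((m:ℂ)+2)) j * (-((m:ℂ)+2)+(j:ℂ))) * ((b+(j:ℂ))*2/((c+(j:ℂ))*((j:ℂ)+1)) * u))
      + (j:ℂ) * (c + (j:ℂ) - 1) * (ascC (-((m:ℂ)+2)) j * u) := by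
  have hm2 : ((m:ℂ)+2) ≠ 0 := by
    have : ((m+2:ℕ):ℂ) ≠ 0 := Nat.cast_ne_zero.mpr (by omega)
    push_cast at this; exact this
  have hm1 : ((m:ℂ)+1) ≠ 0 := by
    have : ((m+1:ℕ):ℂ) ≠ 0 := Nat.cast_ne_zero.mpr (by omega)
    push_cast at this; exact this
  have hj1 : ((j:ℂ)+1) ≠ 0 := by
    have : ((j+1:ℕ):ℂ) ≠ 0 := Nat.cast_ne_zero.mpr (by omega)
    push_cast at this; exact this
  have hB : ascC (-((m:ℂ)+1)) j = ascC (-((m:ℂ)+2)) j * (((m:ℂ)+2) - j) / ((m:ℂ)+2) := by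
    have h := ascC_shift (-((m:ℂ)+2)) j
    rw [show (-((m:ℂ)+2)+1) = -((m:ℂ)+1) by ring] at h
    rw [eq_div_iff hm2]
    linear_combination h
  have hC : ascC (-(m:ℂ)) j = ascC (-((m:ℂ)+1)) j * (((m:ℂ)+1) - j) / ((m:ℂ)+1) := by
    have h := ascC_shift (-((m:ℂ)+1)) j
    rw [show (-((m:ℂ)+1)+1) = -((m:ℂ)) by ring] at h
    rw [eq_div_iff hm1]
    linear_combination h
  rw [hC, hB]
  generalize ascC (-((m:ℂ)+2)) j = A
  field_simp
  ring

lemma step_id (m j : ℕ) (b c : ℂ) (hc : 0 < c.re) :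
    ((m:ℂ)+2) * ((c + ((m:ℂ)+1)) * Tm b c (m+2) j - (c - 2*b) * Tm b c (m+1) j
      - ((m:ℂ)+1) * Tm b c m j)
    = Hm m b c (j+1) - Hm m b c j := by
  have hcj : ascC c j ≠ 0 := ascC_ne_zero hc j
  have hcj' : c + (j:ℂ) ≠ 0 :=
    re_pos_ne_zero (by simp only [Complex.add_re, Complex.natCast_re]; positivity)
  have hfac : ((j.factorial:ℕ):ℂ) ≠ 0 := Nat.cast_ne_zero.mpr j.factorial_ne_zero
  have hj1 : ((j:ℂ)+1) ≠ 0 := by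
    have : ((j+1:ℕ):ℂ) ≠ 0 := Nat.cast_ne_zero.mpr (by omega)
    push_cast at this; exact this
  have hT1 : Tm b c (m+2) (j+1)
      = (ascC (-((m:ℂ)+2)) j * (-((m:ℂ)+2)+(j:ℂ)))
        * ((b+(j:ℂ))*2/((c+(j:ℂ))*((j:ℂ)+1)) * (ascC b j / ascC c j * 2^j / (j.factorial:ℂ))) := by
    unfold Tm
    rw [ascC_succ, ascC_succ, ascC_succ, Nat.factorial_succ]
    push_cast
    field_simp
    ring
  unfold Hm
  rw [hT1]
  unfold Tm
  push_cast
  linear_combination core m j b c (ascC b j / ascC c j * 2^j / (j.factorial:ℂ)) hcj'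

lemma contig (m : ℕ) (b c : ℂ) (hc : 0 < c.re) :
    (c + ((m:ℂ)+1)) * F2 (m+2) b c
      = (c - 2*b) * F2 (m+1) b c + ((m:ℂ)+1) * F2 m b c := by
  have hm2 : ((m:ℂ)+2) ≠ 0 := by
    have : ((m+2:ℕ):ℂ) ≠ 0 := Nat.cast_ne_zero.mpr (by omega)
    push_cast at this; exact this
  have key : ∑ j ∈ Finset.range (m+3),
      (((m:ℂ)+2) * ((c + ((m:ℂ)+1)) * Tm b c (m+2) j - (c - 2*b) * Tm b c (m+1) j
        - ((m:ℂ)+1) * Tm b c m j)) = 0 := by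
    rw [Finset.sum_congr rfl (fun j _ => step_id m j b c hc)]
    rw [Finset.sum_range_sub (f := Hm m b c)]
    have h1 : Hm m b c 0 = 0 := by simp [Hm]
    have h2 : Hm m b c (m+3) = 0 := by
      unfold Hm Tm
      rw [ascC_neg_nat_zero (by omega : m+2 < m+3)]
      simp
    rw [h1, h2, sub_zero]
  have s2 : ∑ j ∈ Finset.range (m+3), Tm b c (m+2) j = F2 (m+2) b c := rfl
  have s1 : ∑ j ∈ Finset.range (m+3), Tm b c (m+1) j = F2 (m+1) b c := by
    rw [Finset.sum_range_succ]
    have hz : Tm b c (m+1) (m+2) = 0 := by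
      unfold Tm; rw [ascC_neg_nat_zero (by omega)]; simp
    rw [hz, add_zero]; rfl
  have s0 : ∑ j ∈ Finset.range (m+3), Tm b c m j = F2 m b c := by
    rw [Finset.sum_range_succ, Finset.sum_range_succ]
    have hz1 : Tm b c m (m+2) = 0 := by
      unfold Tm; rw [ascC_neg_nat_zero (by omega)]; simp
    have hz2 : Tm b c m (m+1) = 0 := by
      unfold Tm; rw [ascC_neg_nat_zero (by omega)]; simp
    rw [hz1, hz2, add_zero, add_zero]; rfl
  have expand : ∑ j ∈ Finset.range (m+3),
      (((m:ℂ)+2) * ((c + ((m:ℂ)+1)) * Tm b c (m+2) j - (c - 2*b) * Tm b c (m+1) j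
        - ((m:ℂ)+1) * Tm b c m j))
      = ((m:ℂ)+2) * ((c + ((m:ℂ)+1)) * F2 (m+2) b c - (c - 2*b) * F2 (m+1) b c
        - ((m:ℂ)+1) * F2 m b c) := by
    rw [← s2, ← s1, ← s0]
    rw [Finset.mul_sum, Finset.mul_sum, Finset.mul_sum]
    rw [← Finset.sum_sub_distrib, ← Finset.sum_sub_distrib, ← Finset.mul_sum]
  rw [expand] at key
  rcases mul_eq_zero.mp key with h | h
  · exact absurd h hm2
  · linear_combination h

/-! ### The Wall sequence (rotated orthogonal-polynomial recurrence) -/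

noncomputable def Wse (μ : ℝ) (x : ℂ) : ℕ → ℂ
  | 0 => 1
  | 1 => x
  | (k+2) => x * Wse μ x (k+1) - ((((k:ℝ)+1) * (μ + 1/2 + k) / 4 : ℝ) : ℂ) * Wse μ x k

lemma Wse_conj (μ : ℝ) (x : ℂ) :
    ∀ k, Wse μ ((starRingEnd ℂ) x) k = (starRingEnd ℂ) (Wse μ x k) := by
  intro k
  induction k using Nat.twoStepInduction with
  | zero => simp [Wse]
  | one => simp [Wse]
  | more k ih2 ih1 =>
    simp only [Wse, ih1, ih2, map_sub, map_mul, Complex.conj_ofReal]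

lemma Wse_pos (μ : ℝ) (x : ℂ) (hμ : μ > -(1/2)) (hx : 0 < x.im) :
    ∀ k, 0 < (Wse μ x (k+1) * (starRingEnd ℂ) (Wse μ x k)).im := by
  intro k
  induction k with
  | zero =>
    simp only [Wse, map_one, mul_one]
    exact hx
  | succ k ih =>
    have hγ : (0:ℝ) < ((k:ℝ)+1) * (μ + 1/2 + k) / 4 := by
      have h1 : (0:ℝ) < μ + 1/2 + k := by
        have : (0:ℝ) ≤ (k:ℝ) := Nat.cast_nonneg k
        linarith
      positivity
    have hrec : Wse μ x (k+2) = x * Wse μ x (k+1)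
        - ((((k:ℝ)+1) * (μ + 1/2 + k) / 4 : ℝ) : ℂ) * Wse μ x k := by
      simp only [Wse]
    rw [hrec]
    set W1 := Wse μ x (k+1) with hW1
    set W0 := Wse μ x k with hW0
    set γ : ℝ := ((k:ℝ)+1) * (μ + 1/2 + k) / 4 with hγdef
    have expand : ((x * W1 - (γ:ℂ) * W0) * (starRingEnd ℂ) W1).im
        = Complex.normSq W1 * x.im + γ * (W1 * (starRingEnd ℂ) W0).im := by
      have h1 : x * W1 * (starRingEnd ℂ) W1 = x * (Complex.normSq W1 : ℂ) := by
        rw [mul_assoc, Complex.mul_conj]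
      have h2 : (W0 * (starRingEnd ℂ) W1) = (starRingEnd ℂ) (W1 * (starRingEnd ℂ) W0) := by
        rw [map_mul, Complex.conj_conj]; ring
      rw [sub_mul, Complex.sub_im, mul_assoc ((γ:ℂ)), h2]
      rw [h1]
      simp [Complex.mul_im, Complex.conj_im, Complex.conj_re]
      ring
    rw [expand]
    have h3 : 0 ≤ Complex.normSq W1 * x.im := by
      have := Complex.normSq_nonneg W1
      nlinarith
    nlinarith

lemma Wse_ne_zero (μ : ℝ) (x : ℂ) (hμ : μ > -(1/2)) (hx : x.im ≠ 0) (k : ℕ) :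
    Wse μ x k ≠ 0 := by
  rcases lt_or_gt_of_ne hx with hneg | hpos
  · have hconj : 0 < ((starRingEnd ℂ) x).im := by
      rw [Complex.conj_im]; linarith
    have hne : Wse μ ((starRingEnd ℂ) x) k ≠ 0 := by
      cases k with
      | zero => simp [Wse]
      | succ k =>
        intro h
        have := Wse_pos μ ((starRingEnd ℂ) x) hμ hconj k
        rw [h] at this
        simp at this
    rw [Wse_conj] at hne
    intro h
    rw [h] at hne
    simp at hne
  · cases k with
    | zero => simp [Wse]
    | succ k =>
      intro h
      have := Wse_pos μ x hμ hpos k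
      rw [h] at this
      simp at this

/-! ### Link between `Wse` and `F2` -/

lemma Wse_eq (μ : ℝ) (hμ : μ > -(1/2)) (s : ℂ) :
    ∀ k, ascC ((μ:ℂ)+1/2) k * F2 k (((μ:ℂ)+s)/2) ((μ:ℂ)+1/2)
      = (-2*Complex.I)^k * Wse μ ((1/2 - s) * Complex.I / 2) k := by
  have hcre : 0 < ((μ:ℂ)+1/2).re := by
    simp only [Complex.add_re, Complex.ofReal_re]
    norm_num; linarith
  have hc0 : ((μ:ℂ)+1/2) ≠ 0 := re_pos_ne_zero hcre
  intro k
  induction k using Nat.twoStepInduction with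
  | zero => simp [Wse, ascC_zero, F2_zero']
  | one =>
    rw [F2_one' _ _ hc0]
    simp only [Wse, pow_one, ascC_succ, ascC_zero, one_mul, Nat.cast_zero, add_zero]
    rw [mul_div_assoc', mul_div_cancel_left₀ _ hc0]
    linear_combination (1/2 - s) * Complex.I_sq
  | more k ih2 ih1 =>
    have hco := contig k (((μ:ℂ)+s)/2) ((μ:ℂ)+1/2) hcre
    have hrec : Wse μ ((1/2 - s) * Complex.I / 2) (k+2)
        = ((1/2 - s) * Complex.I / 2) * Wse μ ((1/2 - s) * Complex.I / 2) (k+1)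
          - ((((k:ℝ)+1) * (μ + 1/2 + k) / 4 : ℝ) : ℂ) * Wse μ ((1/2 - s) * Complex.I / 2) k := by
      simp only [Wse]
    have hγ : (((((k:ℝ)+1) * (μ + 1/2 + k) / 4 : ℝ)) : ℂ)
        = ((k:ℂ)+1)*(((μ:ℂ)+1/2)+(k:ℂ))/4 := by push_cast; ring
    have ha2 : ascC ((μ:ℂ)+1/2) (k+2)
        = ascC ((μ:ℂ)+1/2) (k+1) * (((μ:ℂ)+1/2) + ((k:ℂ)+1)) := by
      rw [ascC_succ]; push_cast; ring
    have ha1 : ascC ((μ:ℂ)+1/2) (k+1) = ascC ((μ:ℂ)+1/2) k * (((μ:ℂ)+1/2) + (k:ℂ)) := by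
      rw [ascC_succ]
    rw [hrec, hγ, ha2, ha1]
    rw [ha1] at ih1
    set P := (-2*Complex.I)^k with hP
    have hpow1 : (-2*Complex.I)^(k+1) = P * (-2*Complex.I) := by rw [hP, pow_succ]
    have hpow2 : (-2*Complex.I)^(k+2) = P * (-2*Complex.I) * (-2*Complex.I) := by
      rw [hP, pow_succ, pow_succ]
    rw [hpow1] at ih1
    rw [hpow2]
    set c := (μ:ℂ)+1/2 with hcdef
    set W1 := Wse μ ((1/2 - s) * Complex.I / 2) (k+1) with hW1
    set W0 := Wse μ ((1/2 - s) * Complex.I / 2) k with hW0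
    set a := ascC c k with ha
    linear_combination (a * (c+(k:ℂ))) * hco + (c - 2*(((μ:ℂ)+s)/2)) * ih1
      + (((k:ℂ)+1) * (c+(k:ℂ))) * ih2
      + ((((k:ℂ)+1)*(c+(k:ℂ))*P*W0 - 2*Complex.I*(1/2-s)*P*W1)) * Complex.I_sq

/-! ### The polynomial sequence -/

open Polynomial in
noncomputable def Pl (c : ℂ) : ℕ → Polynomial ℂ
  | 0 => 1
  | 1 => C c⁻¹ * (C (1/2 : ℂ) - X)
  | (k+2) => C (c + (k:ℂ) + 1)⁻¹ *
      ((C (1/2 : ℂ) - X) * Pl c (k+1) + C ((k:ℂ)+1) * Pl c k)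

open Polynomial

lemma Pl_eval (μ : ℝ) (hμ : μ > -(1/2)) (s : ℂ) :
    ∀ n, (Pl ((μ:ℂ)+1/2) n).eval s = F2 n (((μ:ℂ)+s)/2) ((μ:ℂ)+1/2) := by
  have hcre : 0 < ((μ:ℂ)+1/2).re := by
    simp only [Complex.add_re, Complex.ofReal_re]
    norm_num; linarith
  have hc0 : ((μ:ℂ)+1/2) ≠ 0 := re_pos_ne_zero hcre
  intro n
  induction n using Nat.twoStepInduction with
  | zero => simp [Pl, F2_zero']
  | one =>
    rw [F2_one' _ _ hc0, eq_div_iff hc0]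
    simp only [Pl, eval_mul, eval_sub, eval_C, eval_X]
    rw [mul_comm ((((μ:ℂ)+1/2))⁻¹) _, mul_assoc, inv_mul_cancel₀ hc0, mul_one]
    ring
  | more k ih2 ih1 =>
    have hck : (((μ:ℂ)+1/2) + (k:ℂ) + 1) ≠ 0 := by
      apply re_pos_ne_zero
      simp only [Complex.add_re, Complex.natCast_re, Complex.one_re]
      have := hcre
      positivity
    have hco := contig k (((μ:ℂ)+s)/2) ((μ:ℂ)+1/2) hcre
    show (Polynomial.C (((μ:ℂ)+1/2) + (k:ℂ) + 1)⁻¹ *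
      ((Polynomial.C (1/2 : ℂ) - Polynomial.X) * Pl ((μ:ℂ)+1/2) (k+1)
        + Polynomial.C ((k:ℂ)+1) * Pl ((μ:ℂ)+1/2) k)).eval s = _
    simp only [eval_mul, eval_add, eval_sub, eval_C, eval_X]
    rw [ih1, ih2]
    rw [inv_mul_eq_iff_eq_mul₀ hck]
    linear_combination -hco

lemma Pl_deg (c : ℂ) (hc : 0 < c.re) :
    ∀ n, (Pl c n).natDegree = n ∧ (Pl c n).leadingCoeff = (-1)^n * (ascC c n)⁻¹ := by
  have hc0 : c ≠ 0 := re_pos_ne_zero hc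
  have hqd : (C (1/2:ℂ) - X).natDegree = 1 := by
    rw [show (C (1/2:ℂ) - X) = -(X - C (1/2:ℂ)) by ring, natDegree_neg, natDegree_X_sub_C]
  have hql : (C (1/2:ℂ) - X).leadingCoeff = -1 := by
    rw [show (C (1/2:ℂ) - X) = -(X - C (1/2:ℂ)) by ring, leadingCoeff_neg,
      (monic_X_sub_C ((1:ℂ)/2)).leadingCoeff]
  have hqne : (C (1/2:ℂ) - X) ≠ 0 := fun h => by rw [h] at hqd; simp at hqd
  intro n
  induction n using Nat.twoStepInduction with
  | zero => constructor <;> simp [Pl, ascC_zero]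
  | one =>
    constructor
    · show (C c⁻¹ * (C (1/2 : ℂ) - X)).natDegree = 1
      rw [natDegree_C_mul (inv_ne_zero hc0), hqd]
    · show (C c⁻¹ * (C (1/2 : ℂ) - X)).leadingCoeff = _
      rw [leadingCoeff_mul, leadingCoeff_C, hql]
      simp [ascC_succ, ascC_zero]
  | more k ih2 ih1 =>
    obtain ⟨hd0, hl0⟩ := ih2
    obtain ⟨hd1, hl1⟩ := ih1
    have hcn1 : ascC c (k+1) ≠ 0 := ascC_ne_zero hc _
    have hlne : (Pl c (k+1)).leadingCoeff ≠ 0 := by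
      rw [hl1]
      exact mul_ne_zero (pow_ne_zero _ (by norm_num)) (inv_ne_zero hcn1)
    have hP1ne : Pl c (k+1) ≠ 0 := leadingCoeff_ne_zero.mp hlne
    have hck1 : (c + (k:ℂ) + 1) ≠ 0 := by
      apply re_pos_ne_zero
      simp only [Complex.add_re, Complex.natCast_re, Complex.one_re]
      positivity
    have hmul_d : ((C (1/2:ℂ) - X) * Pl c (k+1)).natDegree = k+2 := by
      rw [natDegree_mul hqne hP1ne, hqd, hd1]
      omega
    have hqne2 : (C (1/2:ℂ) - X) * Pl c (k+1) ≠ 0 := mul_ne_zero hqne hP1ne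
    have hdegr : (C ((k:ℂ)+1) * Pl c k).degree < ((C (1/2:ℂ) - X) * Pl c (k+1)).degree := by
      apply degree_lt_degree
      rw [hmul_d]
      have := le_trans (natDegree_C_mul_le ((k:ℂ)+1) (Pl c k)) (le_of_eq hd0)
      omega
    have hsum_d : ((C (1/2:ℂ) - X) * Pl c (k+1) + C ((k:ℂ)+1) * Pl c k).degree
        = ((C (1/2:ℂ) - X) * Pl c (k+1)).degree := degree_add_eq_left_of_degree_lt hdegr
    have hsum_nd : ((C (1/2:ℂ) - X) * Pl c (k+1) + C ((k:ℂ)+1) * Pl c k).natDegree = k+2 := by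
      have := natDegree_eq_of_degree_eq_some (by
        rw [hsum_d, degree_eq_natDegree hqne2, hmul_d] : _ = ((k+2 : ℕ) : WithBot ℕ))
      exact this
    have hsum_l : ((C (1/2:ℂ) - X) * Pl c (k+1) + C ((k:ℂ)+1) * Pl c k).leadingCoeff
        = ((C (1/2:ℂ) - X) * Pl c (k+1)).leadingCoeff := by
      rw [add_comm]
      exact leadingCoeff_add_of_degree_lt hdegr
    constructor
    · show (C (c + (k:ℂ) + 1)⁻¹ * _).natDegree = k+2
      rw [natDegree_C_mul (inv_ne_zero hck1), hsum_nd]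
    · show (C (c + (k:ℂ) + 1)⁻¹ * _).leadingCoeff = _
      rw [leadingCoeff_mul, leadingCoeff_C, hsum_l, leadingCoeff_mul, hql, hl1]
      rw [show ascC c (k+2) = ascC c (k+1) * (c + (k:ℂ) + 1) by rw [ascC_succ]; push_cast; ring]
      rw [mul_inv]
      ring

/-! ### Main theorem -/

theorem stmt6 (μ : ℝ) (hμ : μ > -(1/2)) (n : ℕ) :
    (∃ P : Polynomial ℂ, P.natDegree = n ∧
        ∀ s : ℂ, P.eval s = F2 n (((μ : ℂ) + s) / 2) ((μ : ℂ) + 1/2)) ∧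
    ∀ s : ℂ, F2 n (((μ : ℂ) + s) / 2) ((μ : ℂ) + 1/2) = 0 → s.re = 1/2 := by
  have hcre : 0 < ((μ:ℂ) + 1/2).re := by
    simp only [Complex.add_re, Complex.ofReal_re]
    norm_num; linarith
  constructor
  · exact ⟨Pl ((μ:ℂ)+1/2) n, (Pl_deg ((μ:ℂ)+1/2) hcre n).1, fun s => Pl_eval μ hμ s n⟩
  · intro s hz
    by_contra hre
    have him : ((1/2 - s) * Complex.I / 2).im = (1/2 - s.re)/2 := by
      simp [Complex.mul_im, Complex.div_im, Complex.I_re, Complex.I_im,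
        Complex.sub_re, Complex.sub_im]
    have hx : ((1/2 - s) * Complex.I / 2).im ≠ 0 := by
      rw [him]; intro h; apply hre; linarith
    have h1 := Wse_ne_zero μ _ hμ hx n
    have h2 := Wse_eq μ hμ s n
    rw [hz, mul_zero] at h2
    have hI : (-2*Complex.I) ≠ 0 := by
      simp [Complex.I_ne_zero]
    rcases mul_eq_zero.mp h2.symm with h | h
    · exact (pow_ne_zero n hI) h
    · exact h1 h
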